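/- For any Boolean function f : {-1,1}^n → {-1,1}, the spectral entropy satisfies H[f] ≤ log₂(n+1) · (I[f] + 1), where H[f] = Σ_S f̂(S)² log₂(1/f̂(S)²) and I[f] = Σ_S |S| f̂(S)². -/

import Mathlib

open Finset Real

noncomputable def chi {n : ℕ} (S : Finset (Fin n)) (x : Fin n → Bool) : ℝ :=
  ∏ i ∈ S, (if x i then (1:ℝ) else -1)

noncomputable def coeff {n : ℕ} (f : (Fin n → Bool) → ℝ) (S : Finset (Fin n)) : ℝ :=
  (∑ x : Fin n → Bool, f x * chi S x) / 2 ^ n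

noncomputable def spectralEntropy {n : ℕ} (f : (Fin n → Bool) → ℝ) : ℝ :=
  ∑ S : Finset (Fin n), (coeff f S) ^ 2 * Real.logb 2 (1 / (coeff f S) ^ 2)

noncomputable def totalInfluence {n : ℕ} (f : (Fin n → Bool) → ℝ) : ℝ :=
  ∑ S : Finset (Fin n), (S.card : ℝ) * (coeff f S) ^ 2

noncomputable def minEntropy {n : ℕ} (f : (Fin n → Bool) → ℝ) : ℝ :=
  ⨅ S : Finset (Fin n), Real.logb 2 (1 / (coeff f S) ^ 2)

noncomputable def fVar {n : ℕ} (f : (Fin n → Bool) → ℝ) : ℝ := 1 - (coeff f ∅) ^ 2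

def IsBoolean {n : ℕ} (f : (Fin n → Bool) → ℝ) : Prop := ∀ x, f x = 1 ∨ f x = -1

noncomputable def binEnt (x : ℝ) : ℝ :=
  x * Real.logb 2 (1 / x) + (1 - x) * Real.logb 2 (1 / (1 - x))

noncomputable def l1Norm {n : ℕ} (f : (Fin n → Bool) → ℝ) : ℝ :=
  ∑ S : Finset (Fin n), |coeff f S|

noncomputable def tensor {n m : ℕ} (f : (Fin n → Bool) → ℝ) (g : (Fin m → Bool) → ℝ) :
    (Fin (n + m) → Bool) → ℝ :=
  fun x => f (fun i => x (Fin.castAdd m i)) * g (fun j => x (Fin.natAdd n j))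

lemma sum_chi_mul_chi {n : ℕ} (x y : Fin n → Bool) :
    ∑ S : Finset (Fin n), chi S x * chi S y = if x = y then (2:ℝ)^n else 0 := by
  have h1 : ∀ S : Finset (Fin n), chi S x * chi S y
      = ∏ i ∈ S, ((if x i then (1:ℝ) else -1) * (if y i then (1:ℝ) else -1)) := by
    intro S; rw [chi, chi, ← Finset.prod_mul_distrib]
  simp_rw [h1]
  have h2 : ∑ S : Finset (Fin n), ∏ i ∈ S,
      ((if x i then (1:ℝ) else -1) * (if y i then (1:ℝ) else -1))
      = ∏ i : Fin n, ((if x i then (1:ℝ) else -1) * (if y i then (1:ℝ) else -1) + 1) := by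
    rw [Finset.prod_add]
    simp [Finset.powerset_univ]
  rw [h2]
  by_cases hxy : x = y
  · subst hxy
    simp only [if_pos rfl]
    have : ∀ i : Fin n, ((if x i then (1:ℝ) else -1) * (if x i then (1:ℝ) else -1) + 1) = 2 := by
      intro i; by_cases h : x i <;> simp [h] <;> norm_num
    rw [Finset.prod_congr rfl (fun i _ => this i), Finset.prod_const]
    simp
  · rw [if_neg hxy]
    obtain ⟨i, hi⟩ : ∃ i, x i ≠ y i := by
      by_contra h; push_neg at h; exact hxy (funext h)
    apply Finset.prod_eq_zero (Finset.mem_univ i)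
    rcases Bool.eq_false_or_eq_true (x i) with h | h <;>
      rcases Bool.eq_false_or_eq_true (y i) with h' | h' <;>
      simp_all

lemma parseval {n : ℕ} (f : (Fin n → Bool) → ℝ) (hf : ∀ x, f x = 1 ∨ f x = -1) :
    ∑ S : Finset (Fin n), (coeff f S)^2 = 1 := by
  have key : ∑ S : Finset (Fin n), (∑ x : Fin n → Bool, f x * chi S x)^2
      = (2:ℝ)^n * ∑ x : Fin n → Bool, (f x)^2 := by
    have : ∀ S : Finset (Fin n), (∑ x : Fin n → Bool, f x * chi S x)^2
        = ∑ x : Fin n → Bool, ∑ y : Fin n → Bool, f x * f y * (chi S x * chi S y) := by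
      intro S
      rw [sq, Finset.sum_mul_sum]
      congr 1; ext x; congr 1; ext y; ring
    simp_rw [this]
    rw [Finset.sum_comm]
    have : ∀ x : Fin n → Bool, ∑ S : Finset (Fin n), ∑ y : Fin n → Bool,
        f x * f y * (chi S x * chi S y) = (2:ℝ)^n * (f x)^2 := by
      intro x
      rw [Finset.sum_comm]
      have : ∀ y : Fin n → Bool, ∑ S : Finset (Fin n), f x * f y * (chi S x * chi S y)
          = f x * f y * (if x = y then (2:ℝ)^n else 0) := by
        intro y; rw [← Finset.mul_sum, sum_chi_mul_chi]
      simp_rw [this]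
      have : (∑ y : Fin n → Bool, f x * f y * if x = y then (2:ℝ)^n else 0)
          = ∑ y : Fin n → Bool, if x = y then f x * f y * (2:ℝ)^n else 0 := by
        congr 1; ext y; by_cases h : x = y <;> simp [h]
      rw [this, Finset.sum_ite_eq Finset.univ x (fun y => f x * f y * (2:ℝ)^n)]
      simp; ring
    simp_rw [this]
    rw [← Finset.mul_sum]
  have hfx : ∀ x, (f x)^2 = 1 := by
    intro x; rcases hf x with h | h <;> rw [h] <;> ring
  simp_rw [coeff, div_pow, ← Finset.sum_div, key, hfx]
  rw [Finset.sum_const]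
  simp [Finset.card_univ]
  rw [div_eq_one_iff_eq (by positivity)]
  ring

lemma nat_key : ∀ m : ℕ, (m+2)^m ≤ (m+1)^(m+1) := by
  intro m
  induction m with
  | zero => simp
  | succ k ih =>
    have hpos : 0 < (k+2)^k := Nat.pow_pos (by omega)
    apply Nat.le_of_mul_le_mul_right _ hpos
    calc (k+1+2)^(k+1) * (k+2)^k ≤ (k+3)^(k+1) * (k+1)^(k+1) := by
          exact Nat.mul_le_mul_left _ ih
      _ = ((k+3)*(k+1))^(k+1) := by rw [Nat.mul_pow]
      _ ≤ ((k+2)^2)^(k+1) := Nat.pow_le_pow_left (by ring_nf; omega) _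
      _ = (k+2)^(2*(k+1)) := by rw [← pow_mul]
      _ = (k+1+1)^(k+1+1) * (k+2)^k := by rw [← pow_add]; ring_nf

lemma sum_q_le_one (n : ℕ) :
    ∑ S : Finset (Fin n), (((n:ℝ)+1)⁻¹)^(S.card+1) ≤ 1 := by
  have hn : (0:ℝ) < (n:ℝ)+1 := by positivity
  set c : ℝ := ((n:ℝ)+1)⁻¹ with hc
  have hsum : ∑ S : Finset (Fin n), c^S.card = (c+1)^n := by
    have : ∀ S : Finset (Fin n), c^S.card = ∏ _i ∈ S, c := by
      intro S; rw [Finset.prod_const]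
    simp_rw [this]
    rw [← Finset.powerset_univ]
    have := Finset.prod_add (fun _ : Fin n => c) (fun _ : Fin n => (1:ℝ)) Finset.univ
    simp only [Finset.prod_const_one, mul_one] at this
    rw [← this, Finset.prod_const, Finset.card_univ, Fintype.card_fin]
  have : ∑ S : Finset (Fin n), c^(S.card+1) = c * (c+1)^n := by
    simp_rw [pow_succ]
    rw [← Finset.sum_mul, hsum]; ring
  rw [this]
  have hkey : ((n:ℝ)+2)^n ≤ ((n:ℝ)+1)^(n+1) := by
    have := nat_key n
    have h2 : ((n+2:ℕ):ℝ)^n ≤ ((n+1:ℕ):ℝ)^(n+1) := by exact_mod_cast this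
    push_cast at h2; linarith [h2]
  have hc1 : c + 1 = ((n:ℝ)+2) / ((n:ℝ)+1) := by
    rw [hc]; field_simp; ring
  rw [hc1, div_pow, hc]
  rw [inv_mul_eq_div, div_div]
  rw [div_le_one (by positivity)]
  calc ((n:ℝ)+2)^n ≤ ((n:ℝ)+1)^(n+1) := hkey
    _ = ((n:ℝ)+1)^n * ((n:ℝ)+1) := by rw [pow_succ]

theorem weak_FEI {n : ℕ} (f : (Fin n → Bool) → ℝ) (hf : IsBoolean f) :
    spectralEntropy f ≤ Real.logb 2 (n + 1) * (totalInfluence f + 1) := by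
  have parseval : ∑ S : Finset (Fin n), (coeff f S)^2 = 1 := parseval f hf
  have sumq : ∑ S : Finset (Fin n), (((n:ℝ)+1)⁻¹)^(S.card+1) ≤ 1 := sum_q_le_one n
  set a : Finset (Fin n) → ℝ := fun S => (coeff f S)^2 with ha
  set q : Finset (Fin n) → ℝ := fun S => (((n:ℝ)+1)⁻¹)^(S.card+1) with hq
  have hn1 : (0:ℝ) < (n:ℝ)+1 := by positivity
  have hqpos : ∀ S : Finset (Fin n), 0 < q S := fun S => by positivity
  have hlog2 : (0:ℝ) < Real.log 2 := Real.log_pos (by norm_num)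
  have hanneg : ∀ S, 0 ≤ a S := fun S => sq_nonneg _
  have hlogq : ∀ S : Finset (Fin n), Real.logb 2 (1 / q S)
      = ((S.card : ℝ) + 1) * Real.logb 2 ((n:ℝ)+1) := by
    intro S
    have : 1 / q S = ((n:ℝ)+1)^(S.card+1) := by
      rw [hq]; simp [one_div, inv_pow]
    rw [this, Real.logb_pow]
    push_cast; ring
  -- per-term Gibbs bound
  have key : ∀ S : Finset (Fin n),
      a S * Real.logb 2 (1 / a S) ≤ a S * Real.logb 2 (1 / q S) + (q S - a S) / Real.log 2 := by
    intro S
    rcases eq_or_lt_of_le (hanneg S) with h0 | h0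
    · rw [← h0]
      simp only [zero_mul, mul_zero, sub_zero, zero_add]
      positivity
    · have hloga : Real.logb 2 (1 / a S) = Real.log (1 / a S) / Real.log 2 := rfl
      have hlogq' : Real.logb 2 (1 / q S) = Real.log (1 / q S) / Real.log 2 := rfl
      have main : a S * Real.log (1 / a S) ≤ a S * Real.log (1 / q S) + (q S - a S) := by
        have hane : a S ≠ 0 := ne_of_gt h0
        have hd : Real.log (1 / a S) - Real.log (1 / q S) = Real.log (q S / a S) := by
          rw [one_div, one_div, Real.log_inv, Real.log_inv,
            Real.log_div (ne_of_gt (hqpos S)) hane]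
          ring
        have hle : Real.log (q S / a S) ≤ q S / a S - 1 :=
          Real.log_le_sub_one_of_pos (by positivity)
        have : a S * Real.log (q S / a S) ≤ q S - a S := by
          have := mul_le_mul_of_nonneg_left hle (le_of_lt h0)
          calc a S * Real.log (q S / a S) ≤ a S * (q S / a S - 1) := this
            _ = q S - a S := by field_simp
        nlinarith [hd]
      rw [hloga, hlogq']
      have e1 : a S * (Real.log (1 / a S) / Real.log 2)
          = (a S * Real.log (1 / a S)) / Real.log 2 := by ring
      have e2 : a S * (Real.log (1 / q S) / Real.log 2) + (q S - a S) / Real.log 2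
          = (a S * Real.log (1 / q S) + (q S - a S)) / Real.log 2 := by ring
      rw [e1, e2]
      exact div_le_div_of_nonneg_right main (le_of_lt hlog2)
  -- sum up
  have step1 : spectralEntropy f ≤
      ∑ S : Finset (Fin n), (a S * Real.logb 2 (1 / q S) + (q S - a S) / Real.log 2) := by
    unfold spectralEntropy
    exact Finset.sum_le_sum fun S _ => key S
  have step2 : ∑ S : Finset (Fin n), (a S * Real.logb 2 (1 / q S) + (q S - a S) / Real.log 2)
      ≤ ∑ S : Finset (Fin n), a S * Real.logb 2 (1 / q S) := by
    rw [Finset.sum_add_distrib]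
    have : ∑ S : Finset (Fin n), (q S - a S) / Real.log 2 ≤ 0 := by
      rw [← Finset.sum_div]
      apply div_nonpos_of_nonpos_of_nonneg _ (le_of_lt hlog2)
      rw [Finset.sum_sub_distrib, parseval]
      linarith [sumq]
    linarith [this]
  have step3 : ∑ S : Finset (Fin n), a S * Real.logb 2 (1 / q S)
      = Real.logb 2 ((n:ℝ) + 1) * (totalInfluence f + 1) := by
    have : ∀ S : Finset (Fin n), a S * Real.logb 2 (1 / q S)
        = Real.logb 2 ((n:ℝ)+1) * ((S.card : ℝ) * a S) + Real.logb 2 ((n:ℝ)+1) * a S := by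
      intro S; rw [hlogq S]; ring
    simp_rw [this]
    rw [Finset.sum_add_distrib, ← Finset.mul_sum, ← Finset.mul_sum, parseval]
    unfold totalInfluence
    ring
  calc spectralEntropy f ≤ _ := step1
    _ ≤ _ := step2
    _ = _ := step3
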